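/- Let N = {1,…,n}, S ⊆ N with s := |S|, let the Banzhaf interaction weights be p_t^s(n) := 1/2^{n−s} (constant in t), and let leverage sampling be P(T) := 1/((n+1) · C(n, |T|)). Then the variance factor satisfies the exact identity Γ_S(P) := ∑_{T ⊆ N} (p^s_{|T|−|S∩T|}(n))² / P(T) = (n+1) · C(2n, n) / 4^{n−s}. Moreover, for fixed s, Γ_S(P) = Θ(4^s · √n) as n → ∞. -/

import Mathlib

open Finset

/-- Banzhaf interaction weight `p_t^s(n) = 1/2^{n−s}` (constant in `t`). -/
noncomputable def banW (n s t : ℕ) : ℝ := 1 / 2 ^ (n - s)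

/-- Leverage-sampling probability `P(T) = 1/((n+1) C(n, |T|))`. -/
noncomputable def lev (n : ℕ) (T : Finset (Fin n)) : ℝ :=
  1 / (((n + 1 : ℕ) : ℝ) * (Nat.choose n T.card : ℝ))

/-- Variance factor of the MSR estimator for the Banzhaf interaction index
under leverage sampling. -/
noncomputable def GammaBan (n s : ℕ) (S : Finset (Fin n)) : ℝ :=
  ∑ T : Finset (Fin n), (banW n s (T.card - (S ∩ T).card)) ^ 2 / lev n T

lemma sum_sq_choose (n : ℕ) :
    ∑ k ∈ range (n + 1), n.choose k * n.choose k = (2 * n).choose n := by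
  rw [two_mul, Nat.add_choose_eq, Finset.Nat.sum_antidiagonal_eq_sum_range_succ_mk]
  refine Finset.sum_congr rfl fun k hk => ?_
  rw [Nat.choose_symm (Nat.lt_succ_iff.mp (mem_range.mp hk))]

lemma gamma_eq (n : ℕ) (S : Finset (Fin n)) :
    GammaBan n S.card S
      = ((n : ℝ) + 1) * (Nat.choose (2 * n) n : ℝ) / 4 ^ (n - S.card) := by
  unfold GammaBan
  have hterm : ∀ T : Finset (Fin n),
      (banW n S.card (T.card - (S ∩ T).card)) ^ 2 / lev n T
        = (((n : ℝ) + 1) * (Nat.choose n T.card : ℝ)) / 4 ^ (n - S.card) := by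
    intro T
    unfold banW lev
    rw [div_div_eq_mul_div, div_one]
    have h24 : ((2:ℝ) ^ (n - S.card)) ^ 2 = 4 ^ (n - S.card) := by
      rw [← pow_mul, mul_comm, pow_mul]; norm_num
    rw [div_pow, one_pow, h24, div_mul_eq_mul_div, one_mul]
    push_cast
    ring
  rw [Finset.sum_congr rfl fun T _ => hterm T, ← Finset.sum_div, ← Finset.mul_sum]
  congr 2
  have h1 : (Finset.univ : Finset (Finset (Fin n)))
      = (Finset.univ : Finset (Fin n)).powerset := (Finset.powerset_univ).symm
  rw [h1, Finset.sum_powerset_apply_card (fun m => (Nat.choose n m : ℝ))]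
  simp only [Finset.card_univ, Fintype.card_fin, nsmul_eq_mul]
  push_cast [← sum_sq_choose n]
  ring

lemma cb_rec (n : ℕ) :
    ((n : ℝ) + 1) * (Nat.centralBinom (n + 1) : ℝ)
      = 2 * (2 * (n : ℝ) + 1) * (Nat.centralBinom n : ℝ) := by
  have h := congrArg (fun k : ℕ => (k : ℝ)) (Nat.succ_mul_centralBinom_succ n)
  push_cast at h
  linarith

lemma cb_bounds (n : ℕ) (hn : 1 ≤ n) :
    (4 : ℝ) ^ n * 4 ^ n ≤ 4 * n * (Nat.centralBinom n : ℝ) ^ 2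
    ∧ (3 * (n : ℝ) + 1) * (Nat.centralBinom n : ℝ) ^ 2 ≤ 4 ^ n * 4 ^ n := by
  induction n, hn using Nat.le_induction with
  | base => norm_num [Nat.centralBinom]
  | succ n hn ih =>
    obtain ⟨ih1, ih2⟩ := ih
    have hrec := cb_rec n
    have hcb : (0 : ℝ) ≤ (Nat.centralBinom n : ℝ) := Nat.cast_nonneg _
    have hn1 : (0 : ℝ) < (n : ℝ) + 1 := by positivity
    have hnn : (1 : ℝ) ≤ (n : ℝ) := by exact_mod_cast hn
    have h16 : (0 : ℝ) ≤ (4:ℝ)^n * 4^n := by positivity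
    constructor
    · rw [← mul_le_mul_iff_left₀ hn1]
      have heq : 4 * ((n:ℝ)+1) * ((Nat.centralBinom (n+1) : ℝ))^2 * ((n:ℝ)+1)
          = 4 * (((n:ℝ)+1) * (Nat.centralBinom (n+1) : ℝ))^2 := by ring
      push_cast
      rw [heq, hrec, pow_succ]
      have h5 := mul_le_mul_of_nonneg_left ih1 (by positivity : (0:ℝ) ≤ 16*((n:ℝ)+1))
      nlinarith [sq_nonneg ((Nat.centralBinom n : ℝ))]
    · have h3 : (0 : ℝ) < 3*(n:ℝ)+1 := by positivity
      rw [← mul_le_mul_iff_left₀ (by positivity : (0:ℝ) < ((n:ℝ)+1)^2), ← mul_le_mul_iff_left₀ h3]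
      have heq : (3*(((n:ℝ))+1)+1) * ((Nat.centralBinom (n+1) : ℝ))^2 * ((n:ℝ)+1)^2
          = (3*(n:ℝ)+4) * (((n:ℝ)+1) * (Nat.centralBinom (n+1) : ℝ))^2 := by ring
      push_cast
      have h4 : (4:ℝ)^(n+1) = 4*4^n := by ring
      rw [heq, hrec, h4]
      have h5 := mul_le_mul_of_nonneg_left ih2 (by positivity : (0:ℝ) ≤ 4*(3*(n:ℝ)+4)*(2*(n:ℝ)+1)^2)
      nlinarith [mul_nonneg (by linarith : (0:ℝ) ≤ (n:ℝ)) h16]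

/-- For Banzhaf interaction weights under leverage sampling, the variance factor
satisfies the exact identity `Γ_S(P) = (n+1) C(2n, n) / 4^{n−s}`, and for fixed
`s` it is `Θ(4^s √n)` as `n → ∞`. -/
theorem gamma_banzhaf_leverage :
    (∀ (n : ℕ) (S : Finset (Fin n)),
        GammaBan n S.card S
          = ((n : ℝ) + 1) * (Nat.choose (2 * n) n : ℝ) / 4 ^ (n - S.card)) ∧
    (∀ s : ℕ, ∃ c C : ℝ, 0 < c ∧ 0 < C ∧ ∃ N₀ : ℕ, ∀ n : ℕ, N₀ ≤ n →
      ∀ S : Finset (Fin n), S.card = s →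
        c * ((4 : ℝ) ^ s * Real.sqrt n) ≤ GammaBan n s S
          ∧ GammaBan n s S ≤ C * ((4 : ℝ) ^ s * Real.sqrt n)) := by
  refine ⟨fun n S => gamma_eq n S, fun s => ⟨1/2, 2, by norm_num, by norm_num, 1, ?_⟩⟩
  intro n hn S hS
  subst hS
  have hsn : S.card ≤ n := by
    simpa [Fintype.card_fin] using Finset.card_le_univ S
  have hΓ := gamma_eq n S
  set cb : ℝ := (Nat.centralBinom n : ℝ) with hcbdef
  have hcbc : (Nat.choose (2 * n) n : ℝ) = cb := by
    rw [hcbdef, Nat.centralBinom_eq_two_mul_choose]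
  rw [hcbc] at hΓ
  obtain ⟨hlo, hhi⟩ := cb_bounds n hn
  have hcb0 : (0 : ℝ) ≤ cb := Nat.cast_nonneg _
  have hn0 : (0 : ℝ) ≤ (n : ℝ) := Nat.cast_nonneg _
  have hnn : (1 : ℝ) ≤ (n : ℝ) := by exact_mod_cast hn
  set r : ℝ := Real.sqrt n with hrdef
  have hr0 : (0 : ℝ) ≤ r := Real.sqrt_nonneg _
  have hr2 : r ^ 2 = (n : ℝ) := Real.sq_sqrt hn0
  have hpow : (4:ℝ) ^ (n - S.card) * 4 ^ S.card = 4 ^ n := by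
    rw [← pow_add, Nat.sub_add_cancel hsn]
  have hppos : (0:ℝ) < 4 ^ (n - S.card) := by positivity
  have h4n : (0:ℝ) < (4:ℝ) ^ n := by positivity
  -- key sqrt bounds
  have hA : r * 4 ^ n ≤ 2 * n * cb := by
    have hsq : (r * 4 ^ n) ^ 2 ≤ (2 * n * cb) ^ 2 := by
      have := mul_le_mul_of_nonneg_left hlo hn0
      nlinarith [hr2]
    exact (pow_le_pow_iff_left₀ (by positivity) (by positivity) two_ne_zero).mp hsq
  have hB : r * cb ≤ 4 ^ n := by
    have hsq : (r * cb) ^ 2 ≤ ((4:ℝ) ^ n) ^ 2 := by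
      nlinarith [hr2, sq_nonneg cb]
    exact (pow_le_pow_iff_left₀ (by positivity) (by positivity) two_ne_zero).mp hsq
  rw [hΓ]
  constructor
  · rw [le_div_iff₀ hppos]
    have : 1 / 2 * (4 ^ S.card * r) * 4 ^ (n - S.card) = 1 / 2 * (r * 4 ^ n) := by
      rw [← hpow]; ring
    rw [this]
    nlinarith [hA, hcb0]
  · rw [div_le_iff₀ hppos]
    have : 2 * (4 ^ S.card * r) * 4 ^ (n - S.card) = 2 * (r * 4 ^ n) := by
      rw [← hpow]; ring
    rw [this]
    have h1 : ((n:ℝ) + 1) * cb ≤ 2 * n * cb := by nlinarith [hcb0]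
    have h2 : 2 * (n:ℝ) * cb = 2 * r * (r * cb) := by rw [← hr2]; ring
    calc ((n:ℝ)+1) * cb ≤ 2 * (n:ℝ) * cb := h1
      _ = 2 * r * (r * cb) := h2
      _ ≤ 2 * r * 4 ^ n := by
          apply mul_le_mul_of_nonneg_left hB (by positivity)
      _ = 2 * (r * 4 ^ n) := by ring
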